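/- Suppose algorithm A selects, among candidate solutions indexed by k = 1,…,K, one minimizing the objective value (the MIN composition). If each candidate algorithm A_k is monotone (a winning bid (s_i,b_i) remains winning under any higher declaration (s'_i,b'_i) with s'_i ≥ s_i and b'_i ≤ b_i) and bitonic with respect to the objective (the objective is nonincreasing in higher declarations when agent i wins under A_k, and nondecreasing in lower declarations when agent i loses under A_k), then the MIN composition is itself monotone and bitonic. -/
import Mathlib


/-- Declaration `B'` is higher than `B` at agent `i`: agent `i` reports a weakly larger
size and weakly smaller cost, and all other agents' bids are unchanged. -/
def HigherAt {I : Type*} (B B' : I → ℝ × ℝ) (i : I) : Prop :=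
  (B i).1 ≤ (B' i).1 ∧ (B' i).2 ≤ (B i).2 ∧ ∀ j, j ≠ i → B j = B' j

/-- An allocation rule is monotone: a winner remains a winner under any higher declaration. -/
def MonotoneAlloc {I : Type*} (win : (I → ℝ × ℝ) → I → Prop) : Prop :=
  ∀ B B' i, HigherAt B B' i → win B i → win B' i

/-- An allocation rule is bitonic with respect to an objective `g`: the objective is
nonincreasing in higher declarations when agent `i` wins, and nondecreasing in higher
declarations while agent `i` loses. -/
def BitonicAlloc {I : Type*} (win : (I → ℝ × ℝ) → I → Prop)
    (g : (I → ℝ × ℝ) → ℝ) : Prop :=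
  ∀ B B' i, HigherAt B B' i →
    (win B i → g B' ≤ g B) ∧ (¬ win B' i → g B ≤ g B')

/-- MIN composition: if each of the `K` candidate algorithms is monotone and bitonic with
respect to its objective, then the rule selecting a candidate of minimum objective value
(ties broken towards the least index) is monotone and bitonic. -/
theorem stmt_7 {I : Type*} (K : ℕ)
    (win : Fin K → (I → ℝ × ℝ) → I → Prop)
    (g : Fin K → (I → ℝ × ℝ) → ℝ)
    (hmono : ∀ k, MonotoneAlloc (win k))
    (hbit : ∀ k, BitonicAlloc (win k) (g k))
    (sel : (I → ℝ × ℝ) → Fin K)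
    (hselmin : ∀ B k, g (sel B) B ≤ g k B)
    (hseltie : ∀ B k, g k B ≤ g (sel B) B → sel B ≤ k) :
    MonotoneAlloc (fun B i => win (sel B) B i) ∧
    BitonicAlloc (fun B i => win (sel B) B i) (fun B => g (sel B) B) := by
  constructor
  · intro B B' i h hw
    by_contra hnw
    set k := sel B
    set k' := sel B'
    have hwk' : win k B' i := hmono k B B' i h hw
    have h1 : g k B' ≤ g k B := ((hbit k B B' i h).1 hw)
    have h2 : g k' B ≤ g k' B' := ((hbit k' B B' i h).2 hnw)
    have h3 : g k' B' ≤ g k B' := hselmin B' k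
    have h4 : g k B ≤ g k' B := hselmin B k'
    have e : g k' B' = g k B' := le_antisymm h3 (by linarith)
    have e2 : g k' B = g k B := by linarith
    have hle : k' ≤ k := hseltie B' k (by linarith)
    have hge : k ≤ k' := hseltie B k' (by linarith)
    have : k = k' := le_antisymm hge hle
    exact hnw (this ▸ hwk')
  · intro B B' i h
    constructor
    · intro hw
      have h1 : g (sel B) B' ≤ g (sel B) B := ((hbit (sel B) B B' i h).1 hw)
      exact le_trans (hselmin B' (sel B)) h1
    · intro hnw
      have h2 : g (sel B') B ≤ g (sel B') B' := ((hbit (sel B') B B' i h).2 hnw)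
      exact le_trans (hselmin B (sel B')) h2
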